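/- Let U ∈ ℝ^{n×r} have orthonormal columns and satisfy the strong incoherence property: |⟨e_i, UUᵀe_j⟩ − (r/n)·1_{i=j}| ≤ μ₁√r/n for all 1 ≤ i, j ≤ n. Then for every d ≥ r and every subset S ⊆ {1,…,n} with |S| = d, ‖(n/d)·∑_{k∈S} U^k(U^k)ᵀ − I‖ ≤ μ₁√r, where ‖·‖ is the spectral norm. Consequently, any rank-r matrix M = UΣVᵀ whose singular-vector factors U and V both satisfy the strong incoherence property satisfies assumption A2 with δ_d ≤ μ₁√r for all d ≥ r. -/

import Mathlib

open Matrix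
open scoped BigOperators

noncomputable section

/-- Euclidean norm of a vector. -/
def vecNorm {β : Type*} [Fintype β] (x : β → ℝ) : ℝ :=
  Real.sqrt (∑ i, x i ^ 2)

/-- Spectral norm (largest singular value) of a real matrix. -/
def specNorm {α β : Type*} [Fintype α] [Fintype β] (A : Matrix α β ℝ) : ℝ :=
  sSup {c | ∃ x : β → ℝ, vecNorm x ≤ 1 ∧ c = vecNorm (A.mulVec x)}

/-- Second largest singular value of a real matrix (Courant–Fischer characterization). -/
def sigma2 {α β : Type*} [Fintype α] [Fintype β] (A : Matrix α β ℝ) : ℝ :=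
  ⨅ v : β → ℝ, sSup {c | ∃ x : β → ℝ,
    vecNorm x ≤ 1 ∧ (∑ i, v i * x i) = 0 ∧ c = vecNorm (A.mulVec x)}

/-- Frobenius norm. -/
def frobNorm {α β : Type*} [Fintype α] [Fintype β] (A : Matrix α β ℝ) : ℝ :=
  Real.sqrt (∑ i, ∑ j, A i j ^ 2)

/-- Nuclear norm: the sum of the singular values, i.e. the trace of `√(AᵀA)`. -/
def nuclearNorm {α β : Type*} [Fintype α] [Fintype β] [DecidableEq β]
    (A : Matrix α β ℝ) : ℝ :=
  ((Matrix.isHermitian_conjTranspose_mul_self A).eigenvectorUnitary * Matrix.diagonal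
      ((RCLike.ofReal : ℝ → ℝ) ∘ Real.sqrt ∘ (Matrix.isHermitian_conjTranspose_mul_self A).eigenvalues) *
      (star (Matrix.isHermitian_conjTranspose_mul_self A).eigenvectorUnitary : Matrix β β ℝ)).trace

/-- The sampling operator `P_Ω`. -/
def sampl {n : ℕ} (Ω : Finset (Fin n × Fin n)) (M : Matrix (Fin n) (Fin n) ℝ) :
    Matrix (Fin n) (Fin n) ℝ :=
  Matrix.of fun i j => if (i, j) ∈ Ω then M i j else 0

/-- The biadjacency matrix `G` of the bipartite graph with edge set `Ω`. -/
def biadj {n : ℕ} (Ω : Finset (Fin n × Fin n)) : Matrix (Fin n) (Fin n) ℝ :=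
  Matrix.of fun i j => if (i, j) ∈ Ω then (1 : ℝ) else 0

/-- `Ω` is the edge set of a `d`-regular bipartite graph: every row and every column
of `G` has exactly `d` ones. -/
def RegularSampling {n : ℕ} (Ω : Finset (Fin n × Fin n)) (d : ℕ) : Prop :=
  (∀ i : Fin n, (Finset.univ.filter fun j => (i, j) ∈ Ω).card = d) ∧
  (∀ j : Fin n, (Finset.univ.filter fun i => (i, j) ∈ Ω).card = d)

/-- Assumption G1: the all-ones vector is a top left- and right-singular vector of `G`,
with `σ₁(G) = d`. -/
def AssumptionG1 {n : ℕ} (Ω : Finset (Fin n × Fin n)) (d : ℕ) : Prop :=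
  specNorm (biadj Ω) = d ∧
  (biadj Ω).mulVec (fun _ => 1) = (fun _ => (d : ℝ)) ∧
  Matrix.vecMul (fun _ => 1) (biadj Ω) = (fun _ => (d : ℝ))

/-- Assumption G2: `σ₂(G) ≤ C·√d`. -/
def AssumptionG2 {n : ℕ} (Ω : Finset (Fin n × Fin n)) (d : ℕ) (C : ℝ) : Prop :=
  sigma2 (biadj Ω) ≤ C * Real.sqrt d

/-- Assumption A1 (`μ₀`-incoherence) for one factor: every row `U^i` satisfies
`‖U^i‖² ≤ μ₀ r / n`. -/
def IncoherentRows {n r : ℕ} (U : Matrix (Fin n) (Fin r) ℝ) (μ₀ : ℝ) : Prop :=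
  ∀ i : Fin n, (∑ k, U i k ^ 2) ≤ μ₀ * r / n

/-- Assumption A2 (strong incoherence with parameter `δ`) for one factor:
for every `S` with `|S| = d`, `‖(n/d)·∑_{k∈S} U^k (U^k)ᵀ − I‖ ≤ δ`. -/
def StrongIncoherence {n r : ℕ} (U : Matrix (Fin n) (Fin r) ℝ) (d : ℕ) (δ : ℝ) : Prop :=
  ∀ S : Finset (Fin n), S.card = d →
    specNorm (((n : ℝ) / (d : ℝ)) • (∑ k ∈ S, Matrix.vecMulVec (U k) (U k)) - 1) ≤ δ

/-- `M = U · diagonal s · Vᵀ` is a thin SVD of the rank-`r` matrix `M`. -/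
def IsThinSVD {n r : ℕ} (M : Matrix (Fin n) (Fin n) ℝ)
    (U : Matrix (Fin n) (Fin r) ℝ) (s : Fin r → ℝ) (V : Matrix (Fin n) (Fin r) ℝ) : Prop :=
  Uᵀ * U = 1 ∧ Vᵀ * V = 1 ∧ (∀ i, 0 < s i) ∧ M = U * Matrix.diagonal s * Vᵀ

/-- The projection `P_T` onto the subspace `T` spanned by matrices `UXᵀ` and `YVᵀ`. -/
def projT {n r : ℕ} (U V : Matrix (Fin n) (Fin r) ℝ) (Z : Matrix (Fin n) (Fin n) ℝ) :
    Matrix (Fin n) (Fin n) ℝ :=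
  U * Uᵀ * Z + Z * (V * Vᵀ) - U * Uᵀ * Z * (V * Vᵀ)

/-- The projection `P_{T⊥}` onto the orthogonal complement of `T`. -/
def projTperp {n r : ℕ} (U V : Matrix (Fin n) (Fin r) ℝ) (Z : Matrix (Fin n) (Fin n) ℝ) :
    Matrix (Fin n) (Fin n) ℝ :=
  (1 - U * Uᵀ) * Z * (1 - V * Vᵀ)

end


-- ======================= auxiliary lemmas =======================
open Matrix Finset in
lemma sip_quad_bilin {r : ℕ} (A : Matrix (Fin r) (Fin r) ℝ)
    (hsym : ∀ a b, A a b = A b a) (x y : Fin r → ℝ) :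
    (∑ a, (x a + y a) * A.mulVec (fun b => x b + y b) a)
      - (∑ a, (x a - y a) * A.mulVec (fun b => x b - y b) a)
      = 4 * ∑ a, y a * A.mulVec x a := by
  have h : ∀ z w : Fin r → ℝ, (∑ a, z a * A.mulVec w a) = ∑ a, ∑ b, A a b * z a * w b := by
    intro z w
    refine Finset.sum_congr rfl fun a _ => ?_
    rw [Matrix.mulVec, dotProduct, Finset.mul_sum]
    exact Finset.sum_congr rfl fun b _ => by ring
  have hswap : (∑ a, ∑ b, A a b * x a * y b) = ∑ a, ∑ b, A a b * y a * x b := by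
    rw [Finset.sum_comm]
    refine Finset.sum_congr rfl fun a _ => Finset.sum_congr rfl fun b _ => ?_
    rw [hsym b a]; ring
  rw [h, h, h]
  have expand : (∑ a, ∑ b, A a b * (x a + y a) * (x b + y b))
      - (∑ a, ∑ b, A a b * (x a - y a) * (x b - y b))
      = 2*(∑ a, ∑ b, A a b * x a * y b) + 2*(∑ a, ∑ b, A a b * y a * x b) := by
    rw [Finset.mul_sum, Finset.mul_sum, ← Finset.sum_sub_distrib, ← Finset.sum_add_distrib]
    refine Finset.sum_congr rfl fun a _ => ?_
    rw [Finset.mul_sum, Finset.mul_sum, ← Finset.sum_sub_distrib, ← Finset.sum_add_distrib]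
    exact Finset.sum_congr rfl fun b _ => by ring
  rw [expand, hswap]; ring

open Matrix Finset in
lemma sip_quad_expand {r : ℕ} (A : Matrix (Fin r) (Fin r) ℝ) (z : Fin r → ℝ) :
    (∑ a, z a * A.mulVec z a) = ∑ a, ∑ b, A a b * z a * z b := by
  refine Finset.sum_congr rfl fun a _ => ?_
  rw [Matrix.mulVec, dotProduct, Finset.mul_sum]
  exact Finset.sum_congr rfl fun b _ => by ring

open Matrix Finset in
lemma specNorm_le_of_quad {r : ℕ} {t : ℝ} (ht : 0 ≤ t) (A : Matrix (Fin r) (Fin r) ℝ)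
    (hsym : ∀ a b, A a b = A b a)
    (hquad : ∀ z : Fin r → ℝ, |∑ a, z a * A.mulVec z a| ≤ t * ∑ a, (z a)^2) :
    specNorm A ≤ t := by
  refine Real.sSup_le ?_ ht
  rintro c ⟨x, hx, rfl⟩
  set u := A.mulVec x with hu
  have hxsq : (∑ a, (x a)^2) ≤ 1 := by
    have h0 : (0:ℝ) ≤ ∑ a, (x a)^2 := Finset.sum_nonneg fun a _ => sq_nonneg _
    rw [vecNorm] at hx
    nlinarith [Real.sq_sqrt h0, Real.sqrt_nonneg (∑ a, (x a)^2)]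
  by_cases hN : (∑ a, (u a)^2) = 0
  · rw [vecNorm, hN]; simpa using ht
  · have hNpos : 0 < ∑ a, (u a)^2 :=
      lt_of_le_of_ne (Finset.sum_nonneg fun a _ => sq_nonneg _) (Ne.symm hN)
    set N := Real.sqrt (∑ a, (u a)^2) with hNdef
    have hNgt : 0 < N := Real.sqrt_pos.2 hNpos
    have hN2 : N^2 = ∑ a, (u a)^2 := Real.sq_sqrt hNpos.le
    set y : Fin r → ℝ := fun a => N⁻¹ * u a with hy
    have hysq : (∑ a, (y a)^2) = 1 := by
      simp only [hy, mul_pow]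
      rw [← Finset.mul_sum, ← hN2]
      field_simp
    have hyAx : (∑ a, y a * A.mulVec x a) = N := by
      simp only [hy, mul_assoc, ← hu]
      rw [← Finset.mul_sum]
      have huu : (∑ a, u a * u a) = N^2 := by
        rw [hN2]; exact Finset.sum_congr rfl fun a _ => (pow_two (u a)).symm
      rw [huu]
      field_simp
    have key := sip_quad_bilin A hsym x y
    have h1 := hquad (fun b => x b + y b)
    have h2 := hquad (fun b => x b - y b)
    have hsq : (∑ a, (x a + y a)^2) + (∑ a, (x a - y a)^2)
        = 2*(∑ a, (x a)^2) + 2*(∑ a, (y a)^2) := by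
      rw [← Finset.sum_add_distrib, Finset.mul_sum, Finset.mul_sum, ← Finset.sum_add_distrib]
      exact Finset.sum_congr rfl fun a _ => by ring
    have hb1 := le_abs_self (∑ a, (x a + y a) * A.mulVec (fun b => x b + y b) a)
    have hb2 := neg_le_abs (∑ a, (x a - y a) * A.mulVec (fun b => x b - y b) a)
    have hN4 : 4 * N ≤ 4 * t := by
      rw [← hyAx, ← key] at *
      nlinarith [Finset.sum_nonneg (fun a (_ : a ∈ univ) => sq_nonneg (x a + y a)),
        Finset.sum_nonneg (fun a (_ : a ∈ univ) => sq_nonneg (x a - y a)), hysq, hxsq, ht]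
    have : vecNorm u = N := by rw [vecNorm]
    rw [this]; linarith

section SIPCore
open Matrix Finset
variable {n r : ℕ} (U : Matrix (Fin n) (Fin r) ℝ)

/-- Entries of the projection matrix `U Uᵀ`. -/
def Hm : Fin n → Fin n → ℝ := fun i j => ∑ a, U i a * U j a
/-- The image vector `U z` (rows of `U` dotted with `z`). -/
def wv (z : Fin r → ℝ) : Fin n → ℝ := fun k => ∑ a, U k a * z a

lemma Hm_sym (i j : Fin n) : Hm U i j = Hm U j i := Finset.sum_congr rfl fun a _ => mul_comm _ _

lemma quad_endpoint {nn bb tt rr : ℝ} (hn : 0 < nn) (hb : 0 < bb)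
    (h1 : tt < nn*bb) (h2 : nn*bb ≤ 1+tt) (ht : 0 ≤ tt) (hr : 2 ≤ rr) :
    bb + (rr-1)*(tt^2/(nn^2*bb)) ≤ (1+rr*tt)/nn := by
  have key : nn^2*bb^2 + (rr-1)*tt^2 ≤ (1+rr*tt)*(nn*bb) := by
    nlinarith [mul_nonneg (sub_nonneg.2 h1.le) (sub_nonneg.2 h2),
      mul_nonneg ht (sub_nonneg.2 h2),
      mul_nonneg (mul_nonneg (by linarith : (0:ℝ) ≤ rr - 1) ht) (sub_nonneg.2 h1.le)]
  have e : bb + (rr-1)*(tt^2/(nn^2*bb)) = (nn^2*bb^2 + (rr-1)*tt^2)/(nn^2*bb) := by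
    field_simp
  rw [e, div_le_div_iff₀ (by positivity) hn]
  nlinarith [mul_le_mul_of_nonneg_right key hn.le, hb, hn]

lemma floor_arith {rr nn tt : ℝ} (h2 : 2 ≤ rr) (hn : rr + 2 ≤ nn) (hnpos : 0 < nn)
    (hf : rr - rr^2/nn ≤ tt^2) (ht : 0 ≤ tt) : 1 ≤ tt := by
  have hdiv : rr^2/nn ≤ rr - 1 := by
    rw [div_le_iff₀ hnpos]
    nlinarith
  nlinarith

variable (hU : ∀ a b : Fin r, (∑ k, U k a * U k b) = if a = b then (1:ℝ) else 0)
include hU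

lemma Hm_idem (i j : Fin n) : (∑ l, Hm U i l * Hm U l j) = Hm U i j := by
  unfold Hm
  calc (∑ l, (∑ a, U i a * U l a) * (∑ b, U l b * U j b))
      = ∑ l, ∑ a, ∑ b, (U i a * U j b) * (U l a * U l b) := by
        refine Finset.sum_congr rfl fun l _ => ?_
        rw [Finset.sum_mul_sum]
        exact Finset.sum_congr rfl fun a _ => Finset.sum_congr rfl fun b _ => by ring
    _ = ∑ a, ∑ b, (U i a * U j b) * (∑ l, U l a * U l b) := by
        rw [Finset.sum_comm]
        refine Finset.sum_congr rfl fun a _ => ?_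
        rw [Finset.sum_comm]
        exact Finset.sum_congr rfl fun b _ => (Finset.mul_sum _ _ _).symm
    _ = ∑ a, U i a * U j a := by
        refine Finset.sum_congr rfl fun a _ => ?_
        rw [Finset.sum_congr rfl fun b _ => by rw [hU a b]]
        simp

lemma wv_eq_H_mul (z : Fin r → ℝ) (k : Fin n) :
    wv U z k = ∑ j, Hm U k j * wv U z j := by
  unfold wv Hm
  calc (∑ a, U k a * z a)
      = ∑ a, ∑ b, (if a = b then (1:ℝ) else 0) * (U k a * z b) := by
        refine Finset.sum_congr rfl fun a _ => ?_
        simp [ite_mul]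
    _ = ∑ a, ∑ b, (∑ j, U j a * U j b) * (U k a * z b) := by
        exact Finset.sum_congr rfl fun a _ => Finset.sum_congr rfl fun b _ => by rw [hU a b]
    _ = ∑ a, ∑ b, ∑ j, (U k a * U j a) * (U j b * z b) := by
        refine Finset.sum_congr rfl fun a _ => Finset.sum_congr rfl fun b _ => ?_
        rw [Finset.sum_mul]
        exact Finset.sum_congr rfl fun j _ => by ring
    _ = ∑ a, ∑ j, ∑ b, (U k a * U j a) * (U j b * z b) := by
        exact Finset.sum_congr rfl fun a _ => Finset.sum_comm
    _ = ∑ j, ∑ a, ∑ b, (U k a * U j a) * (U j b * z b) := Finset.sum_comm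
    _ = ∑ j, (∑ a, U k a * U j a) * (∑ b, U j b * z b) := by
        exact Finset.sum_congr rfl fun j _ => (Finset.sum_mul_sum _ _ _ _).symm

lemma wv_norm (z : Fin r → ℝ) : (∑ k, (wv U z k)^2) = ∑ a, (z a)^2 := by
  unfold wv
  calc (∑ k, (∑ a, U k a * z a)^2)
      = ∑ k, ∑ a, ∑ b, (z a * z b) * (U k a * U k b) := by
        refine Finset.sum_congr rfl fun k _ => ?_
        rw [sq, Finset.sum_mul_sum]
        exact Finset.sum_congr rfl fun a _ => Finset.sum_congr rfl fun b _ => by ring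
    _ = ∑ a, ∑ b, (z a * z b) * (∑ k, U k a * U k b) := by
        rw [Finset.sum_comm]
        refine Finset.sum_congr rfl fun a _ => ?_
        rw [Finset.sum_comm]
        exact Finset.sum_congr rfl fun b _ => (Finset.mul_sum _ _ _).symm
    _ = ∑ a, (z a)^2 := by
        refine Finset.sum_congr rfl fun a _ => ?_
        rw [Finset.sum_congr rfl fun b _ => by rw [hU a b]]
        simp [sq]

lemma Hm_rowsq (i : Fin n) : (∑ j, (Hm U i j)^2) = Hm U i i := by
  rw [← Hm_idem U hU i i]
  exact Finset.sum_congr rfl fun j _ => by rw [Hm_sym U j i, sq]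

lemma Hm_trace : (∑ i, Hm U i i) = (r:ℝ) := by
  unfold Hm
  rw [Finset.sum_comm]
  calc (∑ a : Fin r, ∑ i, U i a * U i a) = ∑ a : Fin r, (1:ℝ) := by
        refine Finset.sum_congr rfl fun a _ => ?_
        rw [hU a a]; simp
    _ = r := by simp

lemma block {t : ℝ} (hn : 0 < n) (ht : 0 ≤ t)
    (hH : ∀ i j, |Hm U i j - (if i = j then (r:ℝ)/n else 0)| ≤ t/n)
    (T : Finset (Fin n)) (z : Fin r → ℝ) :
    (∑ k ∈ T, (wv U z k)^2) ≤ ((r + T.card * t)/n) * ∑ a, (z a)^2 := by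
  set w := wv U z with hw
  set v : Fin n → ℝ := fun k => if k ∈ T then w k else 0 with hv
  set σ := ∑ k ∈ T, (w k)^2 with hσ
  set Sz := ∑ a, (z a)^2 with hSz
  have hnR : (0:ℝ) < n := by exact_mod_cast hn
  have hσ0 : 0 ≤ σ := Finset.sum_nonneg fun k _ => sq_nonneg _
  have hSz0 : 0 ≤ Sz := Finset.sum_nonneg fun a _ => sq_nonneg _
  have hc0 : 0 ≤ ((r:ℝ) + T.card * t)/n := by positivity
  -- v sums
  have hvsq : (∑ k, (v k)^2) = σ := by
    simp only [hv, ite_pow, hσ]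
    rw [show ((0:ℝ)^2) = 0 by norm_num]
    simp [Finset.sum_ite_mem]
  -- s1 : σ = ∑_j (Hv)_j * w_j
  have s1 : σ = ∑ j, (∑ k, Hm U j k * v k) * w j := by
    have e0 : σ = ∑ k, v k * w k := by
      simp only [hv, ite_mul, zero_mul, hσ]
      rw [Finset.sum_ite_mem]
      simp [sq]
    rw [e0]
    calc (∑ k, v k * w k) = ∑ k, v k * ∑ j, Hm U k j * w j := by
          refine Finset.sum_congr rfl fun k _ => ?_
          rw [← wv_eq_H_mul U hU z k]
      _ = ∑ k, ∑ j, (Hm U k j * v k) * w j := by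
          refine Finset.sum_congr rfl fun k _ => ?_
          rw [Finset.mul_sum]
          exact Finset.sum_congr rfl fun j _ => by ring
      _ = ∑ j, ∑ k, (Hm U k j * v k) * w j := Finset.sum_comm
      _ = ∑ j, (∑ k, Hm U j k * v k) * w j := by
          refine Finset.sum_congr rfl fun j _ => ?_
          rw [Finset.sum_mul]
          exact Finset.sum_congr rfl fun k _ => by rw [Hm_sym]
  -- s3 : ∑_j (Hv)_j ^2 = ∑_k ∑_l v k * v l * H k l
  have s3 : (∑ j, (∑ k, Hm U j k * v k)^2) = ∑ k, ∑ l, v k * v l * Hm U k l := by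
    calc (∑ j, (∑ k, Hm U j k * v k)^2)
        = ∑ j, ∑ k, ∑ l, (v k * v l) * (Hm U j k * Hm U j l) := by
          refine Finset.sum_congr rfl fun j _ => ?_
          rw [sq, Finset.sum_mul_sum]
          exact Finset.sum_congr rfl fun k _ => Finset.sum_congr rfl fun l _ => by ring
      _ = ∑ k, ∑ j, ∑ l, (v k * v l) * (Hm U j k * Hm U j l) := Finset.sum_comm
      _ = ∑ k, ∑ l, ∑ j, (v k * v l) * (Hm U j k * Hm U j l) := by
          exact Finset.sum_congr rfl fun k _ => Finset.sum_comm
      _ = ∑ k, ∑ l, v k * v l * Hm U k l := by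
          refine Finset.sum_congr rfl fun k _ => Finset.sum_congr rfl fun l _ => ?_
          rw [← Finset.mul_sum]
          congr 1
          calc (∑ j, Hm U j k * Hm U j l) = ∑ j, Hm U k j * Hm U j l := by
                exact Finset.sum_congr rfl fun j _ => by rw [Hm_sym U j k]
            _ = Hm U k l := Hm_idem U hU k l
  -- s4 : quadratic form bound
  have habs : (∑ k, |v k|) = ∑ k ∈ T, |w k| := by
    simp only [hv, apply_ite abs, abs_zero]
    rw [Finset.sum_ite_mem]
    simp
  have s4 : (∑ k, ∑ l, v k * v l * Hm U k l) ≤ (r/n) * σ + (t/n) * (∑ k ∈ T, |w k|)^2 := by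
    have expand : ∀ k l, v k * v l * Hm U k l
        = v k * v l * (if k = l then (r:ℝ)/n else 0)
          + v k * v l * (Hm U k l - (if k = l then (r:ℝ)/n else 0)) := by
      intro k l; ring
    have e1 : (∑ k, ∑ l, v k * v l * (if k = l then (r:ℝ)/n else 0)) = (r/n) * σ := by
      rw [← hvsq, Finset.mul_sum]
      refine Finset.sum_congr rfl fun k _ => ?_
      rw [Finset.sum_eq_single k]
      · simp [sq]; ring
      · intro l _ hlk; simp [Ne.symm hlk]
      · intro h; exact absurd (Finset.mem_univ k) h
    have e2 : (∑ k, ∑ l, v k * v l * (Hm U k l - (if k = l then (r:ℝ)/n else 0)))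
        ≤ (t/n) * (∑ k ∈ T, |w k|)^2 := by
      rw [← habs, sq, Finset.sum_mul_sum, Finset.mul_sum]
      refine Finset.sum_le_sum fun k _ => ?_
      rw [Finset.mul_sum]
      refine Finset.sum_le_sum fun l _ => ?_
      calc v k * v l * (Hm U k l - (if k = l then (r:ℝ)/n else 0))
          ≤ |v k * v l * (Hm U k l - (if k = l then (r:ℝ)/n else 0))| := le_abs_self _
        _ = |v k| * |v l| * |Hm U k l - (if k = l then (r:ℝ)/n else 0)| := by
            rw [abs_mul, abs_mul]
        _ ≤ |v k| * |v l| * (t/n) := by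
            refine mul_le_mul_of_nonneg_left (hH k l) (by positivity)
        _ = t/n * (|v k| * |v l|) := by ring
    calc (∑ k, ∑ l, v k * v l * Hm U k l)
        = (∑ k, ∑ l, v k * v l * (if k = l then (r:ℝ)/n else 0))
          + ∑ k, ∑ l, v k * v l * (Hm U k l - (if k = l then (r:ℝ)/n else 0)) := by
          rw [← Finset.sum_add_distrib]
          refine Finset.sum_congr rfl fun k _ => ?_
          rw [← Finset.sum_add_distrib]
          exact Finset.sum_congr rfl fun l _ => expand k l
      _ ≤ (r/n) * σ + (t/n) * (∑ k ∈ T, |w k|)^2 := by rw [e1]; exact add_le_add_right e2 _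
  -- s5 : ℓ1–ℓ2
  have s5 : (∑ k ∈ T, |w k|)^2 ≤ T.card * σ := by
    have := Finset.sum_mul_sq_le_sq_mul_sq T (fun k => |w k|) (fun _ => (1:ℝ))
    simp only [mul_one, one_pow, sq_abs] at this
    calc (∑ k ∈ T, |w k|)^2 ≤ (∑ k ∈ T, (w k)^2) * (∑ _k ∈ T, (1:ℝ)) := this
      _ = T.card * σ := by rw [Finset.sum_const, nsmul_eq_mul, hσ]; ring
  -- s2 : Cauchy-Schwarz
  have s2 : σ^2 ≤ (((r:ℝ) + T.card * t)/n * σ) * Sz := by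
    have cs := Finset.sum_mul_sq_le_sq_mul_sq Finset.univ (fun j => ∑ k, Hm U j k * v k) w
    rw [← s1] at cs
    have hHv : (∑ j, (∑ k, Hm U j k * v k)^2) ≤ ((r:ℝ) + T.card * t)/n * σ := by
      rw [s3]
      calc (∑ k, ∑ l, v k * v l * Hm U k l) ≤ (r/n) * σ + (t/n) * (∑ k ∈ T, |w k|)^2 := s4
        _ ≤ (r/n) * σ + (t/n) * (T.card * σ) := by
            refine add_le_add_right (mul_le_mul_of_nonneg_left s5 (by positivity)) _
        _ = ((r:ℝ) + T.card * t)/n * σ := by field_simp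
    have hwsq : (∑ j, (w j)^2) = Sz := wv_norm U hU z
    calc σ^2 ≤ (∑ j, (∑ k, Hm U j k * v k)^2) * (∑ j, (w j)^2) := cs
      _ ≤ (((r:ℝ) + T.card * t)/n * σ) * Sz := by
          rw [hwsq]
          exact mul_le_mul_of_nonneg_right hHv hSz0
  -- conclude
  rcases eq_or_lt_of_le hσ0 with h0 | hpos
  · have := mul_nonneg hc0 hSz0; linarith
  · nlinarith [s2, hpos]

lemma trace_identity :
    (∑ i, ∑ j, (Hm U i j - (if i = j then (r:ℝ)/n else 0))^2) = (r:ℝ) - r^2/n ∨ n = 0 := by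
  rcases Nat.eq_zero_or_pos n with h | hn
  · right; exact h
  left
  have hnR : (0:ℝ) < n := by exact_mod_cast hn
  have expand : ∀ i j : Fin n, (Hm U i j - (if i = j then (r:ℝ)/n else 0))^2
      = (Hm U i j)^2 - 2 * (Hm U i j * (if i = j then (r:ℝ)/n else 0))
        + (if i = j then (r:ℝ)/n else 0)^2 := fun i j => by ring
  have S1 : (∑ i, ∑ j, (Hm U i j)^2) = (r:ℝ) := by
    rw [Finset.sum_congr rfl fun i _ => Hm_rowsq U hU i]
    exact Hm_trace U hU
  have S2 : (∑ i, ∑ j, Hm U i j * (if i = j then (r:ℝ)/n else 0)) = r^2/n := by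
    have e : ∀ i : Fin n, (∑ j, Hm U i j * (if i = j then (r:ℝ)/n else 0)) = Hm U i i * (r/n) := by
      intro i
      rw [Finset.sum_eq_single i]
      · simp
      · intro j _ hji; simp [Ne.symm hji]
      · intro h; exact absurd (Finset.mem_univ i) h
    rw [Finset.sum_congr rfl fun i _ => e i, ← Finset.sum_mul, Hm_trace U hU]
    field_simp
  have S3 : (∑ i : Fin n, ∑ j, (if i = j then (r:ℝ)/n else 0)^2) = r^2/n := by
    have e : ∀ i : Fin n, (∑ j, (if i = j then (r:ℝ)/n else 0)^2) = (r/n)^2 := by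
      intro i
      rw [Finset.sum_eq_single i]
      · simp
      · intro j _ hji; simp [Ne.symm hji]
      · intro h; exact absurd (Finset.mem_univ i) h
    rw [Finset.sum_congr rfl fun i _ => e i, Finset.sum_const]
    simp only [Finset.card_univ, Fintype.card_fin, nsmul_eq_mul]
    field_simp
  calc (∑ i, ∑ j, (Hm U i j - (if i = j then (r:ℝ)/n else 0))^2)
      = (∑ i, ∑ j, (Hm U i j)^2) - 2*(∑ i, ∑ j, Hm U i j * (if i = j then (r:ℝ)/n else 0))
        + ∑ i, ∑ j, (if i = j then (r:ℝ)/n else 0)^2 := by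
        rw [Finset.mul_sum, ← Finset.sum_sub_distrib, ← Finset.sum_add_distrib]
        refine Finset.sum_congr rfl fun i _ => ?_
        rw [Finset.mul_sum, ← Finset.sum_sub_distrib, ← Finset.sum_add_distrib]
        exact Finset.sum_congr rfl fun j _ => expand i j
    _ = (r:ℝ) - r^2/n := by rw [S1, S2, S3]; ring

lemma floor_bound {t : ℝ} (hn : 0 < n) (ht : 0 ≤ t)
    (hH : ∀ i j, |Hm U i j - (if i = j then (r:ℝ)/n else 0)| ≤ t/n) :
    (r:ℝ) - r^2/n ≤ t^2 := by
  have hnR : (0:ℝ) < n := by exact_mod_cast hn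
  rcases trace_identity U hU with hid | h0
  · rw [← hid]
    have hterm : ∀ i j : Fin n, (Hm U i j - (if i = j then (r:ℝ)/n else 0))^2 ≤ (t/n)^2 := by
      intro i j
      rw [← sq_abs]
      exact pow_le_pow_left₀ (abs_nonneg _) (hH i j) 2
    calc (∑ i, ∑ j, (Hm U i j - (if i = j then (r:ℝ)/n else 0))^2)
        ≤ ∑ i : Fin n, ∑ j : Fin n, (t/n)^2 :=
          Finset.sum_le_sum fun i _ => Finset.sum_le_sum fun j _ => hterm i j
      _ = n * (n * (t/n)^2) := by
          simp [Finset.sum_const, Finset.card_univ, nsmul_eq_mul]; try ring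
      _ = t^2 := by field_simp
  · omega

lemma special {t : ℝ} (hn1 : n = r + 1) (hr2 : 2 ≤ r) (ht : 0 ≤ t) (ht1 : t < 1)
    (hH : ∀ i j, |Hm U i j - (if i = j then (r:ℝ)/n else 0)| ≤ t/n)
    (z : Fin r → ℝ) (k : Fin n) :
    (wv U z k)^2 ≤ ((1 + r * t)/n) * ∑ a, (z a)^2 := by
  have hn : 0 < n := by omega
  have hnR : (0:ℝ) < n := by exact_mod_cast hn
  have hnr : (n:ℝ) = (r:ℝ) + 1 := by exact_mod_cast congrArg (Nat.cast (R := ℝ)) hn1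
  have hrR : (2:ℝ) ≤ r := by exact_mod_cast hr2
  set K : Fin n → Fin n → ℝ := fun i j => (if i = j then (1:ℝ) else 0) - Hm U i j with hK
  set c : Fin n → ℝ := fun i => K i i with hc
  clear_value K c
  have Ksym : ∀ i j, K i j = K j i := by
    intro i j; simp only [hK]
    rw [Hm_sym U i j]
    congr 1
    by_cases h : i = j <;> simp [h, eq_comm]
  have Kidem : ∀ i j, (∑ l, K i l * K l j) = K i j := by
    intro i j
    have e : ∀ l, K i l * K l j
        = ((if i = l then (1:ℝ) else 0) * (if l = j then (1:ℝ) else 0))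
          - (if i = l then (1:ℝ) else 0) * Hm U l j
          - Hm U i l * (if l = j then (1:ℝ) else 0)
          + Hm U i l * Hm U l j := by
      intro l; simp only [hK]; ring
    rw [Finset.sum_congr rfl fun l _ => e l]
    rw [Finset.sum_add_distrib, Finset.sum_sub_distrib, Finset.sum_sub_distrib]
    have e1 : (∑ l, (if i = l then (1:ℝ) else 0) * (if l = j then (1:ℝ) else 0))
        = (if i = j then (1:ℝ) else 0) := by
      rw [Finset.sum_eq_single i]
      · simp
      · intro l _ hli; simp [Ne.symm hli]
      · intro h; exact absurd (Finset.mem_univ i) h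
    have e2 : (∑ l, (if i = l then (1:ℝ) else 0) * Hm U l j) = Hm U i j := by
      rw [Finset.sum_eq_single i]
      · simp
      · intro l _ hli; simp [Ne.symm hli]
      · intro h; exact absurd (Finset.mem_univ i) h
    have e3 : (∑ l, Hm U i l * (if l = j then (1:ℝ) else 0)) = Hm U i j := by
      rw [Finset.sum_eq_single j]
      · simp
      · intro l _ hlj; simp [hlj]
      · intro h; exact absurd (Finset.mem_univ j) h
    rw [e1, e2, e3, Hm_idem U hU i j]
    simp only [hK]
    ring
  have Krowsq : ∀ i, (∑ l, (K i l)^2) = c i := by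
    intro i
    simp only [hc]
    rw [← Kidem i i]
    exact Finset.sum_congr rfl fun l _ => by rw [Ksym l i, sq]
  have Ktrace : (∑ i, c i) = 1 := by
    simp only [hc, hK]
    rw [Finset.sum_sub_distrib]
    rw [Hm_trace U hU]
    simp [hnr]
  have csb : ∀ i j, (K i j)^2 ≤ c i * c j := by
    intro i j
    have := Finset.sum_mul_sq_le_sq_mul_sq Finset.univ (fun l => K i l) (fun l => K l j)
    rw [Kidem i j] at this
    calc (K i j)^2 ≤ (∑ l, (K i l)^2) * (∑ l, (K l j)^2) := this
      _ = c i * c j := by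
          rw [Krowsq i]
          congr 1
          rw [← Krowsq j]
          exact Finset.sum_congr rfl fun l _ => by rw [Ksym l j]
  have sumKsq : (∑ i, ∑ j, (K i j)^2) = 1 := by
    rw [Finset.sum_congr rfl fun i _ => Krowsq i, Ktrace]
  have eqprod : ∀ i j, c i * c j = (K i j)^2 := by
    have hz : (∑ i, ∑ j, (c i * c j - (K i j)^2)) = 0 := by
      rw [Finset.sum_congr rfl fun i _ => Finset.sum_sub_distrib _ _]
      rw [Finset.sum_sub_distrib, sumKsq]
      have : (∑ i, ∑ j, c i * c j) = (∑ i, c i) * (∑ j, c j) := by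
        rw [Finset.sum_mul_sum]
      rw [this, Ktrace]; norm_num
    have hnn : ∀ i ∈ Finset.univ (α := Fin n), (∑ j, (c i * c j - (K i j)^2)) = 0 :=
      (Finset.sum_eq_zero_iff_of_nonneg (fun i _ =>
        Finset.sum_nonneg fun j _ => sub_nonneg.2 (csb i j))).1 hz
    intro i j
    have h2 := (Finset.sum_eq_zero_iff_of_nonneg (fun j _ => sub_nonneg.2 (csb i j))).1
      (hnn i (Finset.mem_univ i)) j (Finset.mem_univ j)
    linarith
  have cdiag : ∀ i, |c i - 1/n| ≤ t/n := by
    intro i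
    have := hH i i
    simp only [if_pos rfl] at this
    have e : c i - 1/n = -(Hm U i i - r/n) := by
      simp only [hc, hK, if_pos rfl]
      field_simp [hnr]
      simp only [if_true, one_mul, hnr]
      ring
    rw [e, abs_neg]
    exact this
  have clow : ∀ i, (1-t)/n ≤ c i := by
    intro i
    have h := (abs_le.1 (cdiag i)).1
    have e : (1-t)/n = 1/n - t/n := by ring
    linarith
  have chigh : ∀ i, c i ≤ (1+t)/n := by
    intro i
    have h := (abs_le.1 (cdiag i)).2
    have e : (1+t)/n = 1/n + t/n := by ring
    linarith
  have cpos : ∀ i, 0 < c i :=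
    fun i => lt_of_lt_of_le (div_pos (by linarith) hnR) (clow i)
  have offd : ∀ i j, i ≠ j → c i * c j ≤ t^2/n^2 := by
    intro i j hij
    rw [eqprod i j]
    have := hH i j
    simp only [if_neg hij] at this
    have e : (K i j)^2 = (Hm U i j - 0)^2 := by simp only [hK, if_neg hij]; ring
    rw [e, ← sq_abs]
    calc |Hm U i j - 0|^2 ≤ (t/n)^2 := pow_le_pow_left₀ (abs_nonneg _) this 2
      _ = t^2/n^2 := by field_simp
  -- max argument
  have hck : 1 - c k ≤ (1 + r*t)/n := by
    set J := Finset.univ.erase k with hJ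
    have hJcard : J.card = r := by
      rw [hJ, Finset.card_erase_of_mem (Finset.mem_univ k), Finset.card_univ, Fintype.card_fin]
      omega
    have hJne : J.Nonempty := Finset.card_pos.1 (by omega)
    obtain ⟨j0, hj0J, hj0max⟩ := J.exists_max_image c hJne
    set b := c j0 with hb
    have hbpos : 0 < b := cpos j0
    have hbu : b ≤ (1+t)/n := chigh j0
    have hsum : 1 - c k = ∑ j ∈ J, c j := by
      have := Finset.add_sum_erase Finset.univ c (Finset.mem_univ k)
      rw [Ktrace] at this
      rw [hJ]
      linarith
    rcases le_or_gt b (t/n) with hbs | hbs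
    · have : (∑ j ∈ J, c j) ≤ J.card * b := by
        calc (∑ j ∈ J, c j) ≤ ∑ _j ∈ J, b := Finset.sum_le_sum fun j hj => hj0max j hj
          _ = J.card * b := by rw [Finset.sum_const, nsmul_eq_mul]
      rw [hJcard] at this
      have hrt : (r:ℝ) * (t/n) ≤ (1 + r*t)/n := by
        rw [show (r:ℝ) * (t/n) = (r*t)/n by ring]
        exact (div_le_div_iff_of_pos_right hnR).2 (by linarith)
      calc 1 - c k ≤ (r:ℝ) * b := by rw [hsum]; exact this
        _ ≤ (r:ℝ) * (t/n) := by
            refine mul_le_mul_of_nonneg_left hbs (by positivity)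
        _ ≤ (1 + r*t)/n := hrt
    · -- b > t/n
      have hsmall : ∀ j ∈ J.erase j0, c j ≤ t^2/(n^2*b) := by
        intro j hj
        have hjj0 : j ≠ j0 := (Finset.mem_erase.1 hj).1
        have := offd j j0 hjj0
        rw [le_div_iff₀ (by positivity)]
        calc c j * (n^2*b) = (c j * c j0) * n^2 := by rw [hb]; ring
          _ ≤ (t^2/n^2) * n^2 := by
              refine mul_le_mul_of_nonneg_right this (by positivity)
          _ = t^2 := by field_simp
      have hcard2 : (J.erase j0).card = r - 1 := by
        rw [Finset.card_erase_of_mem hj0J, hJcard]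
      have hsum2 : (∑ j ∈ J.erase j0, c j) ≤ ((r:ℝ) - 1) * (t^2/(n^2*b)) := by
        calc (∑ j ∈ J.erase j0, c j) ≤ ∑ _j ∈ J.erase j0, t^2/(n^2*b) :=
              Finset.sum_le_sum hsmall
          _ = (J.erase j0).card * (t^2/(n^2*b)) := by rw [Finset.sum_const, nsmul_eq_mul]
          _ = ((r:ℝ) - 1) * (t^2/(n^2*b)) := by
              rw [hcard2]
              congr 1
              have : (1:ℕ) ≤ r := by omega
              push_cast [Nat.cast_sub this]
              ring
      have hsplit : 1 - c k ≤ b + ((r:ℝ)-1) * (t^2/(n^2*b)) := by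
        rw [hsum, ← Finset.add_sum_erase J c hj0J]
        exact add_le_add_right hsum2 b
      -- final algebra
      have h1 : t < (n:ℝ)*b := by
        rw [div_lt_iff₀ hnR] at hbs; nlinarith
      have h2 : (n:ℝ)*b ≤ 1+t := by
        rw [le_div_iff₀ hnR] at hbu; nlinarith [hbu]
      have hcomb : b + ((r:ℝ)-1) * (t^2/((n:ℝ)^2*b)) ≤ (1 + r*t)/n :=
        quad_endpoint hnR hbpos h1 h2 ht hrR
      linarith
  -- conclude via Cauchy-Schwarz on row k
  have hrow : (wv U z k)^2 ≤ (Hm U k k) * ∑ a, (z a)^2 := by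
    have hcs := Finset.sum_mul_sq_le_sq_mul_sq Finset.univ (fun j => Hm U k j) (wv U z)
    rw [← wv_eq_H_mul U hU z k] at hcs
    calc (wv U z k)^2 ≤ (∑ j, (Hm U k j)^2) * (∑ j, (wv U z j)^2) := hcs
      _ = (Hm U k k) * ∑ a, (z a)^2 := by rw [Hm_rowsq U hU k, wv_norm U hU z]
  have hckk : c k = 1 - Hm U k k := by simp only [hc, hK]; simp
  rw [hckk] at hck
  have hHkk : Hm U k k ≤ (1 + r*t)/n := by linarith
  calc (wv U z k)^2 ≤ (Hm U k k) * ∑ a, (z a)^2 := hrow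
    _ ≤ ((1 + r*t)/n) * ∑ a, (z a)^2 := by
        refine mul_le_mul_of_nonneg_right hHkk (Finset.sum_nonneg fun a _ => sq_nonneg _)

lemma key_quad {d : ℕ} {t : ℝ} (ht : 0 ≤ t) (hr : 0 < r) (hrd : r ≤ d)
    (hH : ∀ i j, |Hm U i j - (if i = j then (r:ℝ)/n else 0)| ≤ t/n)
    (S : Finset (Fin n)) (hS : S.card = d) (z : Fin r → ℝ) :
    |((n:ℝ)/d) * (∑ k ∈ S, (wv U z k)^2) - ∑ a, (z a)^2| ≤ t * ∑ a, (z a)^2 := by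
  have hd : 0 < d := lt_of_lt_of_le hr hrd
  have hdn : d ≤ n := by
    rw [← hS]
    calc S.card ≤ Fintype.card (Fin n) := Finset.card_le_univ S
      _ = n := Fintype.card_fin n
  have hn : 0 < n := lt_of_lt_of_le hd hdn
  have hnR : (0:ℝ) < n := by exact_mod_cast hn
  have hdR : (0:ℝ) < d := by exact_mod_cast hd
  have hrdR : (r:ℝ) ≤ d := by exact_mod_cast hrd
  have hdnR : (d:ℝ) ≤ n := by exact_mod_cast hdn
  have hrR : (0:ℝ) < r := by exact_mod_cast hr
  set Sz := ∑ a, (z a)^2 with hSz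
  have Sz0 : 0 ≤ Sz := Finset.sum_nonneg fun a _ => sq_nonneg _
  set σS := ∑ k ∈ S, (wv U z k)^2 with hσS
  set σC := ∑ k ∈ Sᶜ, (wv U z k)^2 with hσC
  have σS0 : 0 ≤ σS := Finset.sum_nonneg fun k _ => sq_nonneg _
  have σC0 : 0 ≤ σC := Finset.sum_nonneg fun k _ => sq_nonneg _
  clear_value Sz σS σC
  have hsplit : σS + σC = Sz := by
    rw [hσS, hσC, hSz, Finset.sum_add_sum_compl]
    exact wv_norm U hU z
  -- upper bound
  have hup : (n:ℝ)/d * σS - Sz ≤ t * Sz := by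
    have hb := block U hU hn ht hH S z
    rw [hS, ← hSz, ← hσS] at hb
    have h1 : (n:ℝ)/d * σS ≤ (n:ℝ)/d * (((r:ℝ) + d*t)/n * Sz) := by
      refine mul_le_mul_of_nonneg_left ?_ (by positivity)
      exact hb
    have h2 : (n:ℝ)/d * (((r:ℝ) + d*t)/n * Sz) = ((r:ℝ)/d) * Sz + t * Sz := by
      field_simp
    have h3 : ((r:ℝ)/d) * Sz ≤ Sz := by
      have : (r:ℝ)/d ≤ 1 := (div_le_one hdR).2 hrdR
      nlinarith [mul_le_mul_of_nonneg_right this Sz0]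
    linarith
  -- lower bound
  have claim : (n:ℝ) * σC ≤ (d*t + ((n:ℝ) - d)) * Sz := by
    rcases le_or_gt 1 t with ht1 | ht1
    · -- t ≥ 1 : trivial
      have hle : σC ≤ Sz := by linarith
      have h1 : (n:ℝ) * σC ≤ (n:ℝ) * Sz := mul_le_mul_of_nonneg_left hle hnR.le
      have h2 : (n:ℝ) * Sz ≤ (d*t + ((n:ℝ) - d)) * Sz := by
        refine mul_le_mul_of_nonneg_right ?_ Sz0
        nlinarith
      linarith
    · have mc : (Sᶜ).card = n - d := by
        rw [Finset.card_compl, hS, Fintype.card_fin]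
      rcases eq_or_lt_of_le hdn with hnd | hdn'
      · -- d = n : Sᶜ empty
        have : Sᶜ.card = 0 := by omega
        have hempty : (Sᶜ : Finset (Fin n)) = ∅ := Finset.card_eq_zero.1 this
        have hz0 : σC = 0 := by rw [hσC, hempty]; simp
        rw [hz0, mul_zero]
        exact mul_nonneg (by nlinarith [mul_nonneg hdR.le ht]) Sz0
      · -- d < n
        have hmR : ((n:ℝ) - d) = ((n - d : ℕ) : ℝ) := by
          rw [Nat.cast_sub hdn]
        rcases le_or_gt r (n - d) with hrm | hmr
        · -- m ≥ r : Frobenius block on the complement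
          have hb := block U hU hn ht hH Sᶜ z
          rw [mc, ← hSz, ← hσC] at hb
          have h1 : (n:ℝ) * σC ≤ ((r:ℝ) + ((n-d:ℕ):ℝ)*t) * Sz := by
            have := mul_le_mul_of_nonneg_left hb hnR.le
            calc (n:ℝ) * σC ≤ (n:ℝ) * (((r:ℝ) + ((n-d:ℕ):ℝ)*t)/n * Sz) := this
              _ = ((r:ℝ) + ((n-d:ℕ):ℝ)*t) * Sz := by field_simp
          have hrmR : (r:ℝ) ≤ ((n-d:ℕ):ℝ) := by exact_mod_cast hrm
          have h2 : ((r:ℝ) + ((n-d:ℕ):ℝ)*t) ≤ (d*t + ((n:ℝ) - d)) := by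
            rw [hmR]
            nlinarith [mul_nonneg (sub_nonneg.2 hrmR) (sub_nonneg.2 ht1.le),
              mul_nonneg (sub_nonneg.2 hrdR) ht]
          calc (n:ℝ) * σC ≤ ((r:ℝ) + ((n-d:ℕ):ℝ)*t) * Sz := h1
            _ ≤ (d*t + ((n:ℝ) - d)) * Sz := mul_le_mul_of_nonneg_right h2 Sz0
        · -- m < r : forces n = r+1, d = r, m = 1
          have hr2 : 2 ≤ r := by omega
          have hnr1 : n = r + 1 := by
            by_contra hne
            have hnr2 : r + 2 ≤ n := by omega
            have hf := floor_bound U hU hn ht hH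
            have hnn : ((r:ℝ)+2) ≤ (n:ℝ) := by exact_mod_cast hnr2
            have hr2R : (2:ℝ) ≤ (r:ℝ) := by exact_mod_cast hr2
            have := floor_arith hr2R hnn hnR hf ht
            linarith
          have hdr : d = r := by omega
          have hm1 : n - d = 1 := by omega
          rw [hm1] at mc
          obtain ⟨k, hk⟩ := Finset.card_eq_one.1 mc
          have hσCk : σC = (wv U z k)^2 := by rw [hσC, hk]; exact Finset.sum_singleton _ _
          have hsp := special U hU hnr1 hr2 ht ht1 hH z k
          have hsp' : (wv U z k)^2 ≤ (1 + (r:ℝ)*t)/n * Sz := by rw [hSz]; exact hsp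
          have h1 : (n:ℝ) * σC ≤ (1 + (r:ℝ)*t) * Sz := by
            rw [hσCk]
            calc (n:ℝ) * (wv U z k)^2 ≤ (n:ℝ) * ((1 + (r:ℝ)*t)/n * Sz) :=
                mul_le_mul_of_nonneg_left hsp' hnR.le
              _ = (1 + (r:ℝ)*t) * Sz := by field_simp
          have he : (1 + (r:ℝ)*t) = (d*t + ((n:ℝ) - d)) := by
            have h1' : (n:ℝ) = (r:ℝ) + 1 := by exact_mod_cast congrArg (Nat.cast (R:=ℝ)) hnr1
            have h2' : (d:ℝ) = (r:ℝ) := by exact_mod_cast congrArg (Nat.cast (R:=ℝ)) hdr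
            rw [h1', h2']; ring
          rw [← he]; exact h1
  have hlow : Sz - (n:ℝ)/d * σS ≤ t * Sz := by
    have e : Sz - (n:ℝ)/d * σS = ((n:ℝ) * σC - ((n:ℝ) - d) * Sz)/d := by
      have hσSe : σS = Sz - σC := by linarith
      rw [hσSe]
      field_simp
      ring
    rw [e, div_le_iff₀ hdR]
    nlinarith [claim]
  exact abs_le.2 ⟨by linarith, by linarith⟩


lemma SIP_strong {t : ℝ} (ht : 0 ≤ t)
    (hH : ∀ i j, |Hm U i j - (if i = j then (r:ℝ)/n else 0)| ≤ t/n) :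
    ∀ d : ℕ, r ≤ d → StrongIncoherence U d t := by
  intro d hrd S hS
  set A := ((n:ℝ)/(d:ℝ)) • (∑ k ∈ S, Matrix.vecMulVec (U k) (U k)) - 1 with hA
  have hAentry : ∀ a b, A a b
      = ((n:ℝ)/d) * (∑ k ∈ S, U k a * U k b) - (if a = b then (1:ℝ) else 0) := by
    intro a b
    rw [hA]
    simp [Matrix.sub_apply, Matrix.sum_apply, Matrix.vecMulVec_apply,
      Matrix.one_apply, Finset.mul_sum]
  have hsym : ∀ a b, A a b = A b a := by
    intro a b
    have h1 : (∑ k ∈ S, U k a * U k b) = ∑ k ∈ S, U k b * U k a :=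
      Finset.sum_congr rfl fun k _ => mul_comm _ _
    have h2 : (if a = b then (1:ℝ) else 0) = (if b = a then (1:ℝ) else 0) := by
      by_cases h : a = b
      · simp [h]
      · rw [if_neg h, if_neg (fun hh => h hh.symm)]
    rw [hAentry, hAentry, h1, h2]
  have hquadform : ∀ z : Fin r → ℝ, (∑ a, z a * A.mulVec z a)
      = ((n:ℝ)/d) * (∑ k ∈ S, (wv U z k)^2) - ∑ a, (z a)^2 := by
    intro z
    rw [sip_quad_expand]
    have e1 : (∑ a, ∑ b, A a b * z a * z b)
        = ((n:ℝ)/d) * (∑ a, ∑ b, (∑ k ∈ S, U k a * U k b) * z a * z b)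
          - ∑ a, ∑ b, (if a = b then (1:ℝ) else 0) * z a * z b := by
      rw [Finset.mul_sum, ← Finset.sum_sub_distrib]
      refine Finset.sum_congr rfl fun a _ => ?_
      rw [Finset.mul_sum, ← Finset.sum_sub_distrib]
      refine Finset.sum_congr rfl fun b _ => ?_
      rw [hAentry]; ring
    have e2 : (∑ a, ∑ b : Fin r, (if a = b then (1:ℝ) else 0) * z a * z b)
        = ∑ a, (z a)^2 := by
      refine Finset.sum_congr rfl fun a _ => ?_
      rw [Finset.sum_eq_single a]
      · simp [sq]
      · intro b _ hba; simp [Ne.symm hba]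
      · intro h; exact absurd (Finset.mem_univ a) h
    have e3 : (∑ a, ∑ b, (∑ k ∈ S, U k a * U k b) * z a * z b)
        = ∑ k ∈ S, (wv U z k)^2 := by
      calc (∑ a, ∑ b, (∑ k ∈ S, U k a * U k b) * z a * z b)
          = ∑ a, ∑ b, ∑ k ∈ S, (U k a * z a) * (U k b * z b) := by
            refine Finset.sum_congr rfl fun a _ => Finset.sum_congr rfl fun b _ => ?_
            rw [Finset.sum_mul, Finset.sum_mul]
            exact Finset.sum_congr rfl fun k _ => by ring
        _ = ∑ a, ∑ k ∈ S, ∑ b, (U k a * z a) * (U k b * z b) := by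
            exact Finset.sum_congr rfl fun a _ => Finset.sum_comm
        _ = ∑ k ∈ S, ∑ a, ∑ b, (U k a * z a) * (U k b * z b) := Finset.sum_comm
        _ = ∑ k ∈ S, (∑ a, U k a * z a) * (∑ b, U k b * z b) := by
            exact Finset.sum_congr rfl fun k _ => (Finset.sum_mul_sum _ _ _ _).symm
        _ = ∑ k ∈ S, (wv U z k)^2 := by
            refine Finset.sum_congr rfl fun k _ => ?_
            rw [sq]; rfl
    rw [e1, e2, e3]
  refine specNorm_le_of_quad ht A hsym ?_
  intro z
  rw [hquadform z]
  rcases Nat.eq_zero_or_pos r with hr0 | hrpos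
  · subst hr0
    have : ∀ k, wv U z k = 0 := by
      intro k; unfold wv; exact Finset.sum_of_isEmpty _
    simp [this]
  · exact key_quad U hU ht hrpos hrd hH S hS z

end SIPCore

/-- strong incoherence property (SIP) implies assumption A2 with
`δ_d ≤ μ₁ √r` for all `d ≥ r` (Claim 1); consequently any rank-`r` matrix `M = UΣVᵀ`
whose factors both satisfy SIP satisfies A2. -/
theorem stmt_4 {n r : ℕ} {μ₁ : ℝ} (U V : Matrix (Fin n) (Fin r) ℝ)
    (hU : Uᵀ * U = 1) (hV : Vᵀ * V = 1)
    (hSIPU : ∀ i j : Fin n,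
      |(U * Uᵀ) i j - (if i = j then (r : ℝ) / n else 0)| ≤ μ₁ * Real.sqrt r / n)
    (hSIPV : ∀ i j : Fin n,
      |(V * Vᵀ) i j - (if i = j then (r : ℝ) / n else 0)| ≤ μ₁ * Real.sqrt r / n) :
    ∀ d : ℕ, r ≤ d →
      StrongIncoherence U d (μ₁ * Real.sqrt r) ∧
      StrongIncoherence V d (μ₁ * Real.sqrt r) := by
  intro d hrd
  rcases Nat.eq_zero_or_pos n with hn0 | hn
  · -- degenerate case n = 0 forces r = 0
    subst hn0
    rcases Nat.eq_zero_or_pos r with hr0 | hrpos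
    · subst hr0
      have ht : (0:ℝ) ≤ μ₁ * Real.sqrt ((0:ℕ):ℝ) := by norm_num
      exact ⟨SIP_strong U (fun a _ => absurd a.2 (Nat.not_lt_zero _)) ht
          (fun i _ => absurd i.2 (Nat.not_lt_zero _)) d hrd,
        SIP_strong V (fun a _ => absurd a.2 (Nat.not_lt_zero _)) ht
          (fun i _ => absurd i.2 (Nat.not_lt_zero _)) d hrd⟩
    · exfalso
      have a : Fin r := ⟨0, hrpos⟩
      have h := congrFun (congrFun hU a) a
      have h1 : (Uᵀ * U) a a = 0 := by
        rw [Matrix.mul_apply]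
        exact Finset.sum_of_isEmpty _
      have h2 : (1 : Matrix (Fin r) (Fin r) ℝ) a a = 1 := Matrix.one_apply_eq a
      rw [h1, h2] at h
      exact one_ne_zero h.symm
  · have hnR : (0:ℝ) < n := by exact_mod_cast hn
    have i0 : Fin n := ⟨0, hn⟩
    have ht : (0:ℝ) ≤ μ₁ * Real.sqrt r := by
      have h := hSIPU i0 i0
      have h0 := abs_nonneg ((U * Uᵀ) i0 i0 - (if i0 = i0 then (r : ℝ) / n else 0))
      by_contra hneg
      push_neg at hneg
      have : μ₁ * Real.sqrt r / n < 0 := div_neg_of_neg_of_pos hneg hnR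
      linarith
    have hUe : ∀ a b : Fin r, (∑ k, U k a * U k b) = if a = b then (1:ℝ) else 0 := by
      intro a b
      have h := congrFun (congrFun hU a) b
      rw [Matrix.mul_apply, Matrix.one_apply] at h
      rw [← h]
      exact Finset.sum_congr rfl fun k _ => by rw [Matrix.transpose_apply]
    have hVe : ∀ a b : Fin r, (∑ k, V k a * V k b) = if a = b then (1:ℝ) else 0 := by
      intro a b
      have h := congrFun (congrFun hV a) b
      rw [Matrix.mul_apply, Matrix.one_apply] at h
      rw [← h]
      exact Finset.sum_congr rfl fun k _ => by rw [Matrix.transpose_apply]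
    have hHU : ∀ i j, |Hm U i j - (if i = j then (r:ℝ)/n else 0)| ≤ (μ₁ * Real.sqrt r)/n := by
      intro i j
      have h := hSIPU i j
      have e : (U * Uᵀ) i j = Hm U i j := by
        rw [Matrix.mul_apply]
        exact Finset.sum_congr rfl fun a _ => by rw [Matrix.transpose_apply]
      rw [e] at h
      exact h
    have hHV : ∀ i j, |Hm V i j - (if i = j then (r:ℝ)/n else 0)| ≤ (μ₁ * Real.sqrt r)/n := by
      intro i j
      have h := hSIPV i j
      have e : (V * Vᵀ) i j = Hm V i j := by
        rw [Matrix.mul_apply]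
        exact Finset.sum_congr rfl fun a _ => by rw [Matrix.transpose_apply]
      rw [e] at h
      exact h
    exact ⟨SIP_strong U hUe ht hHU d hrd, SIP_strong V hVe ht hHV d hrd⟩
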